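/- For every integer n ≥ 1 and every integer i, n · #{ J ⊆ {0, 1, …, n−1} : Σ_{j∈J} j ≡ i (mod n) } = Σ_{d | n, d odd} c_d(i) · 2^{n/d}, where the sum is over the odd positive divisors d of n. -/

import Mathlib

open Finset

/-- The Ramanujan sum `c_d(i) = Σ_{e | gcd(d,i)} μ(d/e)·e`. -/
def ramanujanSum (d : ℕ) (i : ℤ) : ℤ :=
  ∑ e ∈ (Nat.gcd d i.natAbs).divisors, ArithmeticFunction.moebius (d / e) * (e : ℤ)

open Polynomial

private lemma geom_aux {x : ℂ} {M : ℕ} (hM : 0 < M) (hx : x ^ M = 1) :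
    ∑ k ∈ range M, x ^ k = if x = 1 then (M : ℂ) else 0 := by
  split_ifs with h
  · simp [h]
  · rw [geom_sum_eq h, hx, sub_self, zero_div]

private lemma orth {ξ : ℂ} {M : ℕ} (hM : 0 < M) (hξ : IsPrimitiveRoot ξ M) (m : ℤ) :
    ∑ k ∈ range M, ξ ^ ((k : ℤ) * m) = if (M : ℤ) ∣ m then (M : ℂ) else 0 := by
  have h1 : ∀ k : ℕ, ξ ^ ((k:ℤ)*m) = (ξ ^ m) ^ k := by
    intro k; rw [mul_comm, zpow_mul, zpow_natCast]
  simp_rw [h1]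
  rw [geom_aux hM (by rw [← zpow_natCast, ← zpow_mul, mul_comm, zpow_mul, zpow_natCast,
    hξ.pow_eq_one, one_zpow])]
  simp only [hξ.zpow_eq_one_iff_dvd m]

private lemma prod_one_add_pow {η : ℂ} {M : ℕ} (hM : 0 < M) (hη : IsPrimitiveRoot η M) :
    ∏ j ∈ range M, (1 + η ^ j) = 1 - (-1 : ℂ) ^ M := by
  haveI : NeZero M := ⟨hM.ne'⟩
  have key : ((-1 : ℂ)) ^ M - 1 ^ M = ∏ z ∈ nthRootsFinset M (1 : ℂ), (-1 - z * 1) :=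
    IsPrimitiveRoot.pow_sub_pow_eq_prod_sub_mul _ _ hM hη
  have himg : ∏ j ∈ range M, (-1 - η ^ j) = ∏ z ∈ nthRootsFinset M (1 : ℂ), (-1 - z * 1) := by
    refine Finset.prod_nbij (fun j => η ^ j) (fun j _ => ?_) (fun a ha b hb hab => ?_)
      (fun z hz => ?_) (fun j _ => by ring)
    · exact (mem_nthRootsFinset hM (1 : ℂ)).2 (by rw [← pow_mul, mul_comm, pow_mul, hη.pow_eq_one, one_pow])
    · exact hη.pow_inj (mem_range.1 ha) (mem_range.1 hb) hab
    · obtain ⟨j, hj, hje⟩ := hη.eq_pow_of_pow_eq_one ((mem_nthRootsFinset hM (1 : ℂ)).1 hz)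
      exact ⟨j, mem_coe.2 (mem_range.2 hj), hje⟩
  have h2 : ∏ j ∈ range M, (1 + η ^ j) = (-1 : ℂ) ^ M * ∏ j ∈ range M, (-1 - η ^ j) := by
    rw [show ((-1 : ℂ)) ^ M = ∏ _j ∈ range M, (-1 : ℂ) by rw [prod_const, card_range],
      ← prod_mul_distrib]
    exact Finset.prod_congr rfl fun j _ => by ring
  have hsq : ((-1 : ℂ) ^ M) * ((-1) ^ M) = 1 := by
    rw [← pow_add, ← two_mul, pow_mul]; norm_num
  rw [h2, himg, ← key, one_pow]
  linear_combination hsq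

private lemma prod_periodic {η : ℂ} {m : ℕ} (hη : η ^ m = 1) (t : ℕ) :
    ∏ j ∈ range (t * m), (1 + η ^ j) = (∏ j ∈ range m, (1 + η ^ j)) ^ t := by
  induction t with
  | zero => simp
  | succ s ih =>
    rw [Nat.succ_mul, prod_range_add, ih, pow_succ]
    congr 1
    refine Finset.prod_congr rfl fun x _ => ?_
    rw [pow_add, pow_mul', hη, one_pow, one_mul]

private lemma prod_full {ζ : ℂ} {n : ℕ} (hn : 0 < n) (hζ : IsPrimitiveRoot ζ n) (k : ℕ) :
    ∏ j ∈ range n, (1 + ζ ^ (k * j)) =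
      if Odd (n / Nat.gcd k n) then (2 : ℂ) ^ Nat.gcd k n else 0 := by
  rcases Nat.eq_zero_or_pos k with rfl | hk
  · simp only [Nat.gcd_zero_left, Nat.div_self hn, zero_mul, pow_zero]
    rw [if_pos odd_one]
    rw [Finset.prod_const, card_range]
    norm_num
  · set g := Nat.gcd k n with hg
    have hgn : g ∣ n := Nat.gcd_dvd_right k n
    have hgpos : 0 < g := Nat.gcd_pos_of_pos_right k hn
    set m := n / g with hm
    have hmpos : 0 < m := Nat.div_pos (Nat.le_of_dvd hn hgn) hgpos
    have hη : IsPrimitiveRoot (ζ ^ k) m := by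
      have h1 := IsPrimitiveRoot.orderOf (ζ ^ k)
      rwa [orderOf_pow' ζ hk.ne', ← hζ.eq_orderOf, Nat.gcd_comm, ← hg, ← hm] at h1
    have hsplit : ∀ j : ℕ, ζ ^ (k * j) = (ζ ^ k) ^ j := fun j => pow_mul ζ k j
    simp_rw [hsplit]
    have hnm : n = g * m := (Nat.mul_div_cancel' hgn).symm
    rw [hnm, prod_periodic hη.pow_eq_one g, prod_one_add_pow hmpos hη]
    rcases Nat.even_or_odd m with he | ho
    · rw [if_neg (by simpa using he), he.neg_one_pow, sub_self, zero_pow hgpos.ne']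
    · rw [if_pos ho, ho.neg_one_pow]
      norm_num

private lemma sum_range_gcd {n : ℕ} (hn : 0 < n) (F : ℕ → ℂ) :
    ∑ d ∈ n.divisors, ∑ a ∈ (range d).filter (fun a => a.Coprime d), F (a * (n / d)) =
      ∑ k ∈ range n, F k := by
  rw [← sum_sigma n.divisors (fun d => (range d).filter (fun a => a.Coprime d))
    (fun p => F (p.2 * (n / p.1)))]
  refine Finset.sum_nbij' (fun p => p.2 * (n / p.1))
    (fun k => ⟨n / Nat.gcd k n, k / Nat.gcd k n⟩) ?_ ?_ ?_ ?_ ?_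
  · rintro ⟨d, a⟩ hp
    simp only [mem_sigma, Nat.mem_divisors, mem_filter, mem_range] at hp
    obtain ⟨⟨hdn, hn0⟩, ha, hcop⟩ := hp
    have hd0 : 0 < d := Nat.pos_of_ne_zero (fun h => by simp [h] at ha)
    have hnd : 0 < n / d := Nat.div_pos (Nat.le_of_dvd hn hdn) hd0
    simp only [mem_range]
    calc a * (n / d) < d * (n / d) := (Nat.mul_lt_mul_right hnd).2 ha
    _ = n := Nat.mul_div_cancel' hdn
  · intro k hk
    have hk' := mem_range.1 hk
    have hgpos : 0 < Nat.gcd k n := Nat.gcd_pos_of_pos_right k hn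
    have hgn : Nat.gcd k n ∣ n := Nat.gcd_dvd_right k n
    simp only [mem_sigma, Nat.mem_divisors, mem_filter, mem_range]
    refine ⟨⟨Nat.div_dvd_of_dvd hgn, hn.ne'⟩, ?_, Nat.coprime_div_gcd_div_gcd hgpos⟩
    exact Nat.div_lt_div_of_lt_of_dvd hgn hk'
  · rintro ⟨d, a⟩ hp
    simp only [mem_sigma, Nat.mem_divisors, mem_filter, mem_range] at hp
    obtain ⟨⟨hdn, hn0⟩, ha, hcop⟩ := hp
    have hd0 : 0 < d := Nat.pos_of_ne_zero (fun h => by simp [h] at ha)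
    have hnd : 0 < n / d := Nat.div_pos (Nat.le_of_dvd hn hdn) hd0
    have hgcd : Nat.gcd (a * (n / d)) n = n / d := by
      set c := n / d with hc
      rw [show n = d * c from (Nat.mul_div_cancel' hdn).symm, Nat.gcd_mul_right,
        hcop.gcd_eq_one, one_mul]
    simp only [hgcd]
    congr 1
    · exact Nat.div_div_self hdn hn.ne'
    · rw [Nat.mul_div_cancel _ hnd]
  · intro k hk
    have hgpos : 0 < Nat.gcd k n := Nat.gcd_pos_of_pos_right k hn
    have hgn : Nat.gcd k n ∣ n := Nat.gcd_dvd_right k n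
    have hgk : Nat.gcd k n ∣ k := Nat.gcd_dvd_left k n
    simp only
    rw [Nat.div_div_self hgn hn.ne', Nat.div_mul_cancel hgk]
  · intro p hp
    rfl

private lemma moebius_indicator (a d : ℕ) (hd : 0 < d) :
    (if a.Coprime d then (1 : ℂ) else 0) =
      ∑ e ∈ (Nat.gcd a d).divisors, (ArithmeticFunction.moebius e : ℂ) := by
  have h := congrArg (fun f : ArithmeticFunction ℤ => f (Nat.gcd a d))
    ArithmeticFunction.moebius_mul_coe_zeta
  simp only [ArithmeticFunction.coe_mul_zeta_apply, ArithmeticFunction.one_apply] at h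
  have : ((∑ e ∈ (Nat.gcd a d).divisors, ArithmeticFunction.moebius e : ℤ) : ℂ) =
      ((if Nat.gcd a d = 1 then (1 : ℤ) else 0 : ℤ) : ℂ) := by rw [h]
  push_cast at this
  rw [← this]

private lemma inner_dvd_sum {ξ : ℂ} {d : ℕ} (hd : 0 < d) (hξ : IsPrimitiveRoot ξ d)
    (j : ℤ) {e : ℕ} (he : e ∣ d) (he0 : 0 < e) :
    ∑ a ∈ (range d).filter (fun a => e ∣ a), ξ ^ ((a : ℤ) * j) =
      if ((d / e : ℕ) : ℤ) ∣ j then ((d / e : ℕ) : ℂ) else 0 := by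
  have himg : (range d).filter (fun a => e ∣ a) = (range (d / e)).image (fun b => e * b) := by
    ext x
    simp only [mem_filter, mem_range, mem_image]
    constructor
    · rintro ⟨hx, b, rfl⟩
      exact ⟨b, ((Nat.lt_div_iff_mul_lt' he b)).2 hx, rfl⟩
    · rintro ⟨b, hb, rfl⟩
      exact ⟨(Nat.lt_div_iff_mul_lt' he b).1 hb, b, rfl⟩
  rw [himg, Finset.sum_image (fun x _ y _ h => Nat.eq_of_mul_eq_mul_left he0 h)]
  have hpr : IsPrimitiveRoot (ξ ^ e) (d / e) :=
    IsPrimitiveRoot.pow hd hξ (Nat.mul_div_cancel' he).symm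
  have hde : 0 < d / e := Nat.div_pos (Nat.le_of_dvd hd he) he0
  rw [← orth hde hpr j]
  refine Finset.sum_congr rfl fun b _ => ?_
  push_cast
  rw [mul_assoc, ← zpow_natCast ξ e, ← zpow_mul]

private lemma ramanujan_eq {ξ : ℂ} {d : ℕ} (hd : 0 < d) (hξ : IsPrimitiveRoot ξ d) (j : ℤ) :
    ∑ a ∈ (range d).filter (fun a => a.Coprime d), ξ ^ ((a : ℤ) * j) =
      (ramanujanSum d j : ℂ) := by
  rw [Finset.sum_filter]
  have step1 : ∀ a ∈ range d, (if a.Coprime d then ξ ^ ((a : ℤ) * j) else 0) =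
      ∑ e ∈ d.divisors, (if e ∣ a then (ArithmeticFunction.moebius e : ℂ) * ξ ^ ((a : ℤ) * j) else 0) := by
    intro a _
    have hgd : (Nat.gcd a d).divisors = d.divisors.filter (fun e => e ∣ a) := by
      ext e
      simp only [Nat.mem_divisors, mem_filter, Nat.dvd_gcd_iff]
      constructor
      · rintro ⟨⟨h1, h2⟩, _⟩; exact ⟨⟨h2, hd.ne'⟩, h1⟩
      · rintro ⟨⟨h1, _⟩, h2⟩; exact ⟨⟨h2, h1⟩, (Nat.gcd_pos_of_pos_right a hd).ne'⟩
    have := moebius_indicator a d hd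
    calc (if a.Coprime d then ξ ^ ((a : ℤ) * j) else 0)
        = (if a.Coprime d then (1:ℂ) else 0) * ξ ^ ((a : ℤ) * j) := by
          split_ifs <;> simp
      _ = (∑ e ∈ (Nat.gcd a d).divisors, (ArithmeticFunction.moebius e : ℂ)) * ξ ^ ((a : ℤ) * j) := by
          rw [this]
      _ = ∑ e ∈ d.divisors, (if e ∣ a then (ArithmeticFunction.moebius e : ℂ) * ξ ^ ((a : ℤ) * j) else 0) := by
          rw [hgd, Finset.sum_filter, Finset.sum_mul]
          refine Finset.sum_congr rfl fun e _ => ?_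
          split_ifs <;> simp
  rw [Finset.sum_congr rfl step1, Finset.sum_comm]
  have step2 : ∀ e ∈ d.divisors,
      (∑ a ∈ range d, if e ∣ a then (ArithmeticFunction.moebius e : ℂ) * ξ ^ ((a : ℤ) * j) else 0) =
      (ArithmeticFunction.moebius e : ℂ) * (if ((d / e : ℕ) : ℤ) ∣ j then ((d / e : ℕ) : ℂ) else 0) := by
    intro e he
    rw [Nat.mem_divisors] at he
    have he0 : 0 < e := Nat.pos_of_dvd_of_pos he.1 hd
    rw [← Finset.sum_filter, ← Finset.mul_sum, inner_dvd_sum hd hξ j he.1 he0]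
  rw [Finset.sum_congr rfl step2]
  -- reindex e ↦ d / e
  have step3 : ∑ e ∈ d.divisors,
      (ArithmeticFunction.moebius e : ℂ) * (if ((d / e : ℕ) : ℤ) ∣ j then ((d / e : ℕ) : ℂ) else 0) =
      ∑ e ∈ d.divisors,
      (ArithmeticFunction.moebius (d / e) : ℂ) * (if ((e : ℕ) : ℤ) ∣ j then ((e : ℕ) : ℂ) else 0) := by
    rw [← Nat.sum_div_divisors d
      (fun e => (ArithmeticFunction.moebius (d / e) : ℂ) * (if ((e : ℕ) : ℤ) ∣ j then ((e : ℕ) : ℂ) else 0))]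
    refine Finset.sum_congr rfl fun e he => ?_
    rw [Nat.mem_divisors] at he
    rw [Nat.div_div_self he.1 hd.ne']
  rw [step3]
  have step4 : d.divisors.filter (fun e : ℕ => (e : ℤ) ∣ j) = (Nat.gcd d j.natAbs).divisors := by
    ext e
    simp only [Nat.mem_divisors, mem_filter, Nat.dvd_gcd_iff, Int.natCast_dvd]
    constructor
    · rintro ⟨⟨h1, _⟩, h2⟩; exact ⟨⟨h1, h2⟩, (Nat.gcd_pos_of_pos_left j.natAbs hd).ne'⟩
    · rintro ⟨⟨h1, h2⟩, _⟩; exact ⟨⟨h1, hd.ne'⟩, h2⟩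
  have step5 : ∑ e ∈ d.divisors,
      (ArithmeticFunction.moebius (d / e) : ℂ) * (if ((e : ℕ) : ℤ) ∣ j then ((e : ℕ) : ℂ) else 0) =
      ∑ e ∈ (Nat.gcd d j.natAbs).divisors, (ArithmeticFunction.moebius (d / e) : ℂ) * e := by
    rw [← step4, Finset.sum_filter]
    refine Finset.sum_congr rfl fun e _ => ?_
    split_ifs <;> simp
  rw [step5, ramanujanSum]
  push_cast
  rfl

private lemma claimA {n : ℕ} (hn0 : 0 < n) {ζ : ℂ} (hζ : IsPrimitiveRoot ζ n) (hζ0 : ζ ≠ 0)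
    (i : ℤ) :
    ∑ k ∈ range n, ζ ^ (-(k : ℤ) * i) * ∏ j ∈ range n, (1 + ζ ^ (k * j)) =
      (n : ℂ) * (univ.filter
        (fun J : Finset (Fin n) => (∑ j ∈ J, (j : ℤ)) ≡ i [ZMOD (n : ℤ)])).card := by
  classical
  have hprod : ∀ k : ℕ, ∏ j ∈ range n, (1 + ζ ^ (k * j)) =
      ∑ J : Finset (Fin n), ζ ^ (∑ j ∈ J, k * (j : ℕ)) := by
    intro k
    rw [← Fin.prod_univ_eq_prod_range (fun j => 1 + ζ ^ (k * j)) n]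
    have h := Finset.prod_add (fun j : Fin n => ζ ^ (k * (j : ℕ))) (fun _ => (1 : ℂ)) univ
    simp only [prod_const_one, mul_one, powerset_univ] at h
    calc ∏ j : Fin n, (1 + ζ ^ (k * (j : ℕ)))
        = ∏ j : Fin n, (ζ ^ (k * (j : ℕ)) + 1) :=
          Finset.prod_congr rfl fun _ _ => add_comm _ _
      _ = ∑ t : Finset (Fin n), ∏ j ∈ t, ζ ^ (k * (j : ℕ)) := h
      _ = ∑ J : Finset (Fin n), ζ ^ (∑ j ∈ J, k * (j : ℕ)) := by
          refine Finset.sum_congr rfl fun t _ => ?_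
          rw [prod_pow_eq_pow_sum]
  simp_rw [hprod, Finset.mul_sum]
  rw [Finset.sum_comm]
  have hJ : ∀ J : Finset (Fin n),
      ∑ k ∈ range n, ζ ^ (-(k : ℤ) * i) * ζ ^ (∑ j ∈ J, k * (j : ℕ)) =
      if (n : ℤ) ∣ ((∑ j ∈ J, (j : ℕ) : ℕ) : ℤ) - i then (n : ℂ) else 0 := by
    intro J
    rw [← orth hn0 hζ (((∑ j ∈ J, (j : ℕ) : ℕ) : ℤ) - i)]
    refine Finset.sum_congr rfl fun k _ => ?_
    rw [← Finset.mul_sum, ← zpow_natCast ζ (k * ∑ j ∈ J, (j : ℕ)), ← zpow_add₀ hζ0]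
    congr 1
    push_cast
    ring
  rw [Finset.sum_congr rfl fun J _ => hJ J]
  have hcond : ∀ J : Finset (Fin n),
      ((n : ℤ) ∣ ((∑ j ∈ J, (j : ℕ) : ℕ) : ℤ) - i) ↔
        ((∑ j ∈ J, (j : ℤ)) ≡ i [ZMOD (n : ℤ)]) := by
    intro J
    rw [Int.modEq_iff_dvd]
    constructor
    · intro h
      have := dvd_neg.2 h
      simp only [neg_sub] at this
      convert this using 1
      push_cast
      rfl
      simp
    · intro h
      have := dvd_neg.2 h
      simp only [neg_sub] at this
      convert this using 1
      push_cast
      rfl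
      simp
  rw [Finset.sum_congr rfl fun J _ => by rw [if_congr (hcond J) rfl rfl]]
  rw [← Finset.sum_filter, Finset.sum_const, nsmul_eq_mul, mul_comm]

private lemma claimB {n : ℕ} (hn0 : 0 < n) {ζ : ℂ} (hζ : IsPrimitiveRoot ζ n) (i : ℤ) :
    ∑ k ∈ range n, ζ ^ (-(k : ℤ) * i) * ∏ j ∈ range n, (1 + ζ ^ (k * j)) =
      ∑ d ∈ n.divisors.filter (fun d => Odd d), (ramanujanSum d i : ℂ) * 2 ^ (n / d) := by
  rw [← sum_range_gcd hn0 (fun k => ζ ^ (-(k : ℤ) * i) * ∏ j ∈ range n, (1 + ζ ^ (k * j)))]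
  rw [Finset.sum_filter]
  refine Finset.sum_congr rfl fun d hd => ?_
  rw [Nat.mem_divisors] at hd
  have hd0 : 0 < d := Nat.pos_of_dvd_of_pos hd.1 hn0
  have hnd0 : 0 < n / d := Nat.div_pos (Nat.le_of_dvd hn0 hd.1) hd0
  have hζd : IsPrimitiveRoot (ζ ^ (n / d)) d :=
    IsPrimitiveRoot.pow hn0 hζ (Nat.div_mul_cancel hd.1).symm
  have hinner : ∀ a ∈ (range d).filter (fun a => a.Coprime d),
      ζ ^ (-(↑(a * (n / d)) : ℤ) * i) * ∏ j ∈ range n, (1 + ζ ^ (a * (n / d) * j)) =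
      (if Odd d then (2 : ℂ) ^ (n / d) else 0) * (ζ ^ (n / d)) ^ ((a : ℤ) * (-i)) := by
    intro a ha
    rw [mem_filter] at ha
    have hgcd : Nat.gcd (a * (n / d)) n = n / d := by
      set c := n / d with hc
      rw [show n = d * c from (Nat.mul_div_cancel' hd.1).symm, Nat.gcd_mul_right,
        ha.2.gcd_eq_one, one_mul]
    rw [prod_full hn0 hζ (a * (n / d)), hgcd, Nat.div_div_self hd.1 hn0.ne']
    rw [mul_comm]
    congr 1
    rw [← zpow_natCast ζ (n / d), ← zpow_mul]
    congr 1
    push_cast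
    ring
  rw [Finset.sum_congr rfl hinner, ← Finset.mul_sum, ramanujan_eq hd0 hζd (-i)]
  have hram : ramanujanSum d (-i) = ramanujanSum d i := by
    unfold ramanujanSum
    rw [Int.natAbs_neg]
  rw [hram]
  split_ifs with h
  · ring
  · simp

/-- For `n ≥ 1` and any integer `i`,
`n · #{J ⊆ {0,…,n−1} : Σ_{j∈J} j ≡ i (mod n)} = Σ_{d | n, d odd} c_d(i)·2^{n/d}`. -/
theorem count_subsets_sum_mod (n : ℕ) (hn : 1 ≤ n) (i : ℤ) :
    (n : ℤ) *
      (Nat.card {J : Finset (Fin n) // (∑ j ∈ J, (j : ℤ)) ≡ i [ZMOD (n : ℤ)]} : ℤ) =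
    ∑ d ∈ n.divisors.filter (fun d => Odd d),
      ramanujanSum d i * 2 ^ (n / d) := by
  classical
  have hn0 : 0 < n := hn
  have hζ : IsPrimitiveRoot (Complex.exp (2 * Real.pi * Complex.I / n)) n :=
    Complex.isPrimitiveRoot_exp n hn0.ne'
  have hζ0 : Complex.exp (2 * Real.pi * Complex.I / n) ≠ 0 := hζ.ne_zero hn0.ne'
  have hN : Nat.card {J : Finset (Fin n) // (∑ j ∈ J, (j : ℤ)) ≡ i [ZMOD (n : ℤ)]} =
      (univ.filter
        (fun J : Finset (Fin n) => (∑ j ∈ J, (j : ℤ)) ≡ i [ZMOD (n : ℤ)])).card := by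
    rw [Nat.card_eq_fintype_card, Fintype.card_subtype]
  rw [hN]
  have key := (claimA hn0 hζ hζ0 i).symm.trans (claimB hn0 hζ i)
  exact_mod_cast key
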